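/- arXiv:2307.08906 — 5 statements merged into one kernel-verified Lean document; each statement's English description precedes it below -/
import Mathlib

section
/- Let E₁ and E₂ be real normed vector spaces, let U₁ : E₁ → E₁ and U₂ : E₂ → E₂ be invertible bounded linear operators (with bounded inverses), and let W : E₁ → E₂ be a bounded linear operator satisfying W ∘ U₁ = U₂ ∘ W. If F ⊆ E₁ is a set such that the linear span of {U₁ᵏ x : k ∈ ℤ, x ∈ F} is dense in E₁, then the linear span of {U₂ᵏ (W x) : k ∈ ℤ, x ∈ F} is dense in the closure of the range of W. Consequently the multiplicity of the restriction of U₂ to the closure of the range of W is at most the multiplicity of U₁. -/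
/-- Intertwining extends to integer powers. -/
theorem intertwine_zpow
    {E₁ E₂ : Type*} [NormedAddCommGroup E₁] [NormedSpace ℝ E₁]
    [NormedAddCommGroup E₂] [NormedSpace ℝ E₂]
    (U₁ : E₁ ≃L[ℝ] E₁) (U₂ : E₂ ≃L[ℝ] E₂) (W : E₁ →L[ℝ] E₂)
    (hW : ∀ x : E₁, W (U₁ x) = U₂ (W x)) :
    ∀ (k : ℤ) (x : E₁), W ((U₁ ^ k) x) = (U₂ ^ k) (W x) := by
  have hWinv : ∀ x : E₁, W (U₁.symm x) = U₂.symm (W x) := by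
    intro x
    have h := hW (U₁.symm x)
    rw [U₁.apply_symm_apply] at h
    rw [h, U₂.symm_apply_apply]
  intro k
  induction k using Int.induction_on with
  | zero => intro x; rfl
  | succ n ih =>
      intro x
      have h1 : (U₁ ^ ((n : ℤ) + 1)) x = (U₁ ^ (n : ℤ)) (U₁ x) := by
        rw [zpow_add_one]; rfl
      have h2 : (U₂ ^ ((n : ℤ) + 1)) (W x) = (U₂ ^ (n : ℤ)) (U₂ (W x)) := by
        rw [zpow_add_one]; rfl
      rw [h1, h2, ← hW, ih]
  | pred n ih =>
      intro x
      have h1 : (U₁ ^ (-(n : ℤ) - 1)) x = (U₁ ^ (-(n : ℤ))) (U₁.symm x) := by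
        rw [zpow_sub_one]; rfl
      have h2 : (U₂ ^ (-(n : ℤ) - 1)) (W x) = (U₂ ^ (-(n : ℤ))) (U₂.symm (W x)) := by
        rw [zpow_sub_one]; rfl
      rw [h1, h2, ← hWinv, ih]

/-- Let `U₁`, `U₂` be invertible bounded linear operators (with bounded inverses) on real
normed spaces `E₁`, `E₂`, and let `W : E₁ → E₂` be a bounded linear operator intertwining
them: `W ∘ U₁ = U₂ ∘ W`.  If `F ⊆ E₁` is such that the linear span of
`{U₁ᵏ x : k ∈ ℤ, x ∈ F}` is dense in `E₁`, then the linear span of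
`{U₂ᵏ (W x) : k ∈ ℤ, x ∈ F}` is dense in the closure of the range of `W`, i.e. its closure
equals the closure of the range of `W`. -/
theorem span_orbit_image_dense_in_closure_range
    {E₁ E₂ : Type*} [NormedAddCommGroup E₁] [NormedSpace ℝ E₁]
    [NormedAddCommGroup E₂] [NormedSpace ℝ E₂]
    (U₁ : E₁ ≃L[ℝ] E₁) (U₂ : E₂ ≃L[ℝ] E₂) (W : E₁ →L[ℝ] E₂)
    (hW : ∀ x : E₁, W (U₁ x) = U₂ (W x))
    (F : Set E₁)
    (hF : Dense (Submodule.span ℝ {y : E₁ | ∃ k : ℤ, ∃ x ∈ F, y = (U₁ ^ k) x} : Set E₁)) :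
    closure (Submodule.span ℝ {y : E₂ | ∃ k : ℤ, ∃ x ∈ F, y = (U₂ ^ k) (W x)} : Set E₂)
      = closure (Set.range W) := by
  have hWk := intertwine_zpow U₁ U₂ W hW
  set G₁ : Set E₁ := {y : E₁ | ∃ k : ℤ, ∃ x ∈ F, y = (U₁ ^ k) x} with hG₁
  set G₂ : Set E₂ := {y : E₂ | ∃ k : ℤ, ∃ x ∈ F, y = (U₂ ^ k) (W x)} with hG₂
  apply subset_antisymm
  · -- span G₂ ⊆ range W
    apply closure_mono
    have : G₂ ⊆ Set.range W := by
      rintro y ⟨k, x, hx, rfl⟩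
      exact ⟨(U₁ ^ k) x, hWk k x⟩
    intro y hy
    have : Submodule.span ℝ G₂ ≤ LinearMap.range (W : E₁ →ₗ[ℝ] E₂) := by
      rw [Submodule.span_le]
      rintro y ⟨k, x, hx, rfl⟩
      exact ⟨(U₁ ^ k) x, hWk k x⟩
    exact this hy
  · -- range W ⊆ closure (span G₂)
    apply closure_minimal _ isClosed_closure
    rintro _ ⟨x, rfl⟩
    have hx : x ∈ closure (Submodule.span ℝ G₁ : Set E₁) := hF x
    have himg : W x ∈ closure (W '' (Submodule.span ℝ G₁ : Set E₁)) :=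
      image_closure_subset_closure_image W.continuous ⟨x, hx, rfl⟩
    refine closure_mono ?_ himg
    have hmap : Submodule.map (W : E₁ →ₗ[ℝ] E₂) (Submodule.span ℝ G₁)
        ≤ Submodule.span ℝ G₂ := by
      rw [Submodule.map_span]
      apply Submodule.span_mono
      rintro _ ⟨_, ⟨k, x, hx, rfl⟩, rfl⟩
      exact ⟨k, x, hx, hWk k x⟩
    intro y hy
    rcases hy with ⟨z, hz, rfl⟩
    exact hmap ⟨z, hz, rfl⟩
end

section
/- Let (X,T) be a topological dynamical system. If F ⊆ C(X) is a finite set such that the linear span of {f ∘ Tⁿ : f ∈ F, n ∈ ℤ} is dense in C(X), then the number of ergodic T-invariant Borel probability measures on X is at most the cardinality of F. In other words, the number of ergodic measures of (X,T) is at most Mult(T). -/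
open MeasureTheory

/-- Iterates of a homeomorphism, indexed by natural numbers. -/
def hiterN {X : Type*} [TopologicalSpace X] (T : X ≃ₜ X) : ℕ → (X ≃ₜ X)
  | 0 => Homeomorph.refl X
  | n + 1 => (hiterN T n).trans T

/-- Iterates of a homeomorphism, indexed by integers. -/
def hiter {X : Type*} [TopologicalSpace X] (T : X ≃ₜ X) : ℤ → (X ≃ₜ X)
  | Int.ofNat n => hiterN T n
  | Int.negSucc n => (hiterN T (n + 1)).symm

/-- The set of all iterates `f ∘ Tⁿ` for `f ∈ F` and `n ∈ ℤ`. -/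
def iterSet {X : Type*} [TopologicalSpace X] (T : X ≃ₜ X) (F : Set C(X, ℝ)) :
    Set C(X, ℝ) :=
  {h | ∃ f ∈ F, ∃ n : ℤ, h = f.comp (hiter T n : C(X, X))}



section MeasAux
variable {X : Type*} [MeasurableSpace X]

open scoped ENNReal

/-- An invariant probability measure absolutely continuous w.r.t. an ergodic probability
measure equals it. -/
lemma invariant_ac_eq {e : X ≃ᵐ X} {μ ν : Measure X}
    [IsProbabilityMeasure μ] [IsProbabilityMeasure ν]
    (hμ : Ergodic (⇑e) μ) (hν : Measure.map (⇑e) ν = ν) (hac : ν ≪ μ) : ν = μ := by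
  have hmap : Measure.map (⇑e) μ = μ := hμ.toMeasurePreserving.map_eq
  have h1 : (fun x => ν.rnDeriv μ (e x)) =ᵐ[μ] ν.rnDeriv μ := by
    have h := e.measurableEmbedding.rnDeriv_map ν μ
    simp only [hν, hmap] at h
    exact h
  obtain ⟨c, hc⟩ := hμ.ae_eq_const_of_ae_eq_comp₀
    (Measure.measurable_rnDeriv ν μ).nullMeasurable h1
  have hνd : μ.withDensity (ν.rnDeriv μ) = ν := Measure.withDensity_rnDeriv_eq ν μ hac
  have hh : ν = c • μ := by
    rw [← hνd, withDensity_congr_ae hc]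
    exact withDensity_const c
  have hc1 : c = 1 := by
    have := congrArg (fun m : Measure X => m Set.univ) hh
    simpa [Measure.smul_apply] using this.symm
  rw [hh, hc1, one_smul]

/-- Distinct ergodic probability measures are mutually singular. -/
lemma ergodic_mutuallySingular {e : X ≃ᵐ X} {μ ν : Measure X}
    [IsProbabilityMeasure μ] [IsProbabilityMeasure ν]
    (hμ : Ergodic (⇑e) μ) (hν : Ergodic (⇑e) ν) (hne : μ ≠ ν) :
    μ.MutuallySingular ν := by
  by_contra hcon
  set a := ν.withDensity (μ.rnDeriv ν) with ha
  have hdec : μ.singularPart ν + a = μ := (μ.haveLebesgueDecomposition_add ν).symm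
  have hA : a ≠ 0 := by
    intro h0
    apply hcon
    have h1 : μ = μ.singularPart ν := by
      conv_lhs => rw [← hdec]
      rw [h0, add_zero]
    have h2 := μ.mutuallySingular_singularPart ν
    rwa [← h1] at h2
  have hmapμ : Measure.map (⇑e) μ = μ := hμ.toMeasurePreserving.map_eq
  have hmapν : Measure.map (⇑e) ν = ν := hν.toMeasurePreserving.map_eq
  have hainv : Measure.map (⇑e) a = a := by
    rw [ha, e.measurableEmbedding.map_withDensity_rnDeriv μ ν, hmapμ, hmapν]
  have hle : a ≤ μ := Measure.withDensity_rnDeriv_le μ ν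
  set c := a Set.univ with hcdef
  have hc0 : c ≠ 0 := by simpa [hcdef, Measure.measure_univ_eq_zero] using hA
  have hcfin : c ≠ ∞ := by
    have h2 : a Set.univ ≤ μ Set.univ := hle Set.univ
    simp only [measure_univ] at h2
    exact (lt_of_le_of_lt h2 ENNReal.one_lt_top).ne
  haveI hprob : IsProbabilityMeasure (c⁻¹ • a) :=
    ⟨by simp [Measure.smul_apply, ← hcdef, ENNReal.inv_mul_cancel hc0 hcfin]⟩
  have hainv' : Measure.map (⇑e) (c⁻¹ • a) = c⁻¹ • a := by
    rw [Measure.map_smul, hainv]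
  have haca : c⁻¹ • a ≪ a := by
    refine Measure.AbsolutelyContinuous.mk fun s _ hs => ?_
    simp [Measure.smul_apply, hs]
  have hacμ : c⁻¹ • a ≪ μ := haca.trans hle.absolutelyContinuous
  have h1 : c⁻¹ • a = μ := invariant_ac_eq hμ hainv' hacμ
  have hacν : μ ≪ ν := by
    rw [← h1]
    exact haca.trans (withDensity_absolutelyContinuous ν _)
  exact hne (invariant_ac_eq hν hmapμ hacν)

end MeasAux
section Iter
variable {X : Type*} [TopologicalSpace X] [MeasurableSpace X] [BorelSpace X]
  {T : X ≃ₜ X} {μ : Measure X}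

lemma measurePreserving_hiterN (hT : MeasurePreserving (⇑T) μ μ) (n : ℕ) :
    MeasurePreserving (⇑(hiterN T n)) μ μ := by
  induction n with
  | zero => exact MeasurePreserving.id μ
  | succ n ih => exact hT.comp ih

lemma measurePreserving_hiter (hT : MeasurePreserving (⇑T) μ μ) (n : ℤ) :
    MeasurePreserving (⇑(hiter T n)) μ μ := by
  cases n with
  | ofNat n => exact measurePreserving_hiterN hT n
  | negSucc n =>
    have h2 : MeasurePreserving (⇑(hiterN T (n + 1)).toMeasurableEquiv) μ μ :=
      measurePreserving_hiterN hT (n + 1)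
    exact h2.symm (hiterN T (n + 1)).toMeasurableEquiv

lemma integral_hiter (hT : MeasurePreserving (⇑T) μ μ) (f : C(X, ℝ)) (n : ℤ) :
    ∫ x, f ((hiter T n) x) ∂μ = ∫ x, f x ∂μ :=
  (measurePreserving_hiter hT n).integral_comp (hiter T n).measurableEmbedding _

end Iter

section CLM
variable {X : Type*} [TopologicalSpace X] [CompactSpace X] [MeasurableSpace X]
  [OpensMeasurableSpace X]

lemma cmap_integrable (f : C(X, ℝ)) (μ : Measure X) [IsFiniteMeasure μ] :
    Integrable (⇑f) μ :=
  (BoundedContinuousFunction.mkOfCompact f).integrable μ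

/-- Integration against a probability measure as a continuous linear map on `C(X,ℝ)`. -/
noncomputable def intCLM (μ : Measure X) (hμ : IsProbabilityMeasure μ) :
    C(X, ℝ) →L[ℝ] ℝ := by
  haveI := hμ
  exact LinearMap.mkContinuous
    { toFun := fun f => ∫ x, f x ∂μ
      map_add' := fun f g => integral_add (cmap_integrable f μ) (cmap_integrable g μ)
      map_smul' := fun c f => by simpa using integral_smul c (⇑f) }
    1
    (fun f => by
      have h : ‖∫ x, f x ∂μ‖ ≤ ‖f‖ * (μ Set.univ).toReal :=
        norm_integral_le_of_norm_le_const
          (Filter.Eventually.of_forall fun x => f.norm_coe_le_norm x)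
      simpa [measure_univ] using h)

@[simp] lemma intCLM_apply (μ : Measure X) (hμ : IsProbabilityMeasure μ) (f : C(X, ℝ)) :
    intCLM μ hμ f = ∫ x, f x ∂μ := rfl

end CLM

section Main
variable {X : Type*} [MetricSpace X] [CompactSpace X] [MeasurableSpace X] [BorelSpace X]

open scoped ENNReal

set_option maxHeartbeats 1000000 in
lemma card_le_of_subset_ergodic (T : X ≃ₜ X) (F : Finset C(X, ℝ))
    (hF : Dense (Submodule.span ℝ (iterSet T (F : Set C(X, ℝ))) : Set C(X, ℝ)))
    (t : Finset (Measure X))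
    (ht : ∀ μ ∈ t, IsProbabilityMeasure μ ∧ Ergodic (⇑T) μ) :
    t.card ≤ F.card := by
  classical
  set v : {μ : Measure X // μ ∈ t} → ({f : C(X, ℝ) // f ∈ F} → ℝ) :=
    fun μ => fun f => ∫ x, (f : C(X, ℝ)) x ∂(μ : Measure X) with hv
  have hli : LinearIndependent ℝ v := by
    rw [linearIndependent_iff']
    intro s g hsum i₀ hi₀
    set L : C(X, ℝ) →L[ℝ] ℝ :=
      ∑ i ∈ s, g i • intCLM (i : Measure X) (ht i i.2).1 with hL
    have hLf : ∀ h : C(X, ℝ), L h = ∑ i ∈ s, g i * ∫ x, h x ∂(i : Measure X) := by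
      intro h
      simp [hL, ContinuousLinearMap.sum_apply, ContinuousLinearMap.smul_apply, smul_eq_mul]
    have hFzero : ∀ f : C(X, ℝ), f ∈ F →
        ∑ i ∈ s, g i * ∫ x, f x ∂(i : Measure X) = 0 := by
      intro f hf
      have h := congrFun hsum ⟨f, hf⟩
      simpa [hv, Finset.sum_apply, smul_eq_mul] using h
    have hker : ∀ h ∈ iterSet T (F : Set C(X, ℝ)), L h = 0 := by
      rintro h ⟨f, hf, n, rfl⟩
      rw [hLf]
      have heq : ∀ i ∈ s, g i * ∫ x, (f.comp (hiter T n : C(X, X))) x ∂(i : Measure X)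
          = g i * ∫ x, f x ∂(i : Measure X) := by
        intro i hi
        congr 1
        have h2 := integral_hiter (μ := (i : Measure X))
          (ht i i.2).2.toMeasurePreserving f n
        simpa using h2
      rw [Finset.sum_congr rfl heq]
      exact hFzero f hf
    have hLzero : ∀ h : C(X, ℝ), L h = 0 := by
      have hclosed : IsClosed {h : C(X, ℝ) | L h = 0} :=
        isClosed_singleton.preimage L.continuous
      have hsub : (Submodule.span ℝ (iterSet T (F : Set C(X, ℝ))) : Set C(X, ℝ))
          ⊆ {h : C(X, ℝ) | L h = 0} := by
        intro h hh
        have hle : Submodule.span ℝ (iterSet T (F : Set C(X, ℝ)))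
            ≤ LinearMap.ker (L : C(X, ℝ) →ₗ[ℝ] ℝ) := by
          rw [Submodule.span_le]
          intro y hy
          exact LinearMap.mem_ker.2 (hker y hy)
        exact LinearMap.mem_ker.1 (hle hh)
      intro h
      have h1 : (Set.univ : Set C(X, ℝ)) ⊆ {h : C(X, ℝ) | L h = 0} := by
        rw [← hF.closure_eq, ← hclosed.closure_eq]
        exact closure_mono hsub
      exact h1 (Set.mem_univ h)
    -- now show g i₀ = 0
    by_contra hg0
    haveI hPM : ∀ i : {μ : Measure X // μ ∈ t}, IsProbabilityMeasure (i : Measure X) :=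
      fun i => (ht i i.2).1
    have hMS : ∀ j : {μ : Measure X // μ ∈ t}, j ∈ s → j ≠ i₀ →
        ∃ S : Set X, MeasurableSet S ∧ (i₀ : Measure X) S = 0 ∧ (j : Measure X) Sᶜ = 0 := by
      intro j hjs hj
      have hne : (i₀ : Measure X) ≠ (j : Measure X) := by
        intro hEq
        exact hj (Subtype.coe_injective hEq).symm
      have hTi : Ergodic (⇑T.toMeasurableEquiv) (i₀ : Measure X) := (ht i₀ i₀.2).2
      have hTj : Ergodic (⇑T.toMeasurableEquiv) (j : Measure X) := (ht j j.2).2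
      obtain ⟨S, hSm, h1, h2⟩ := ergodic_mutuallySingular hTi hTj hne
      exact ⟨S, hSm, h1, h2⟩
    choose! S hSm hS0 hS1 using hMS
    set U : Set X := ⋃ j ∈ s.erase i₀, S j with hU
    have hUm : MeasurableSet U := by
      refine Finset.measurableSet_biUnion _ fun j hj => ?_
      exact hSm j (Finset.mem_of_mem_erase hj) (Finset.ne_of_mem_erase hj)
    have hU0 : (i₀ : Measure X) U = 0 := by
      refine le_antisymm ?_ zero_le
      refine le_trans (measure_biUnion_finset_le _ _) ?_
      refine le_of_eq (Finset.sum_eq_zero fun j hj => ?_)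
      exact hS0 j (Finset.mem_of_mem_erase hj) (Finset.ne_of_mem_erase hj)
    set B := Uᶜ with hB
    have hB1 : (i₀ : Measure X) B = 1 := by
      rw [hB, measure_compl hUm (measure_ne_top _ _), hU0, measure_univ, tsub_zero]
    have hBj : ∀ j : {μ : Measure X // μ ∈ t}, j ∈ s → j ≠ i₀ → (j : Measure X) B = 0 := by
      intro j hjs hj
      have hsub : B ⊆ (S j)ᶜ := by
        rw [hB]
        apply Set.compl_subset_compl.2
        intro x hx
        exact Set.mem_biUnion (Finset.mem_erase.2 ⟨hj, hjs⟩) hx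
      exact measure_mono_null hsub (hS1 j hjs hj)
    set P := s.filter (fun i => 0 < g i) with hP
    set N := s.filter (fun i => g i < 0) with hN
    set α : Measure X := ∑ i ∈ P, ENNReal.ofReal (g i) • (i : Measure X) with hα
    set β : Measure X := ∑ i ∈ N, ENNReal.ofReal (-g i) • (i : Measure X) with hβ
    haveI hαf : IsFiniteMeasure α := by
      constructor
      rw [hα, Measure.finset_sum_apply]
      refine ENNReal.sum_lt_top.2 fun i hi => ?_
      simp [Measure.smul_apply, measure_univ]
    haveI hβf : IsFiniteMeasure β := by
      constructor
      rw [hβ, Measure.finset_sum_apply]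
      refine ENNReal.sum_lt_top.2 fun i hi => ?_
      simp [Measure.smul_apply, measure_univ]
    have hαβ : α = β := by
      apply ext_of_forall_lintegral_eq_of_IsFiniteMeasure
      intro f
      set f' : C(X, ℝ) := ⟨fun x => (f x : ℝ), by continuity⟩ with hf'
      have hlint : ∀ (μ : Measure X), IsProbabilityMeasure μ →
          ∫⁻ x, (f x : ℝ≥0∞) ∂μ = ENNReal.ofReal (∫ x, f' x ∂μ) := by
        intro μ hμ
        haveI := hμ
        have h1 := BoundedContinuousFunction.toReal_lintegral_coe_eq_integral f μ
        have h2 : ∫⁻ x, (f x : ℝ≥0∞) ∂μ ≠ ∞ :=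
          (BoundedContinuousFunction.lintegral_lt_top_of_nnreal μ f).ne
        have h3 : ∫ x, f' x ∂μ = ∫ x, (f x : ℝ) ∂μ := rfl
        rw [h3, ← h1, ENNReal.ofReal_toReal h2]
      have hnn : ∀ (μ : Measure X), 0 ≤ ∫ x, f' x ∂μ :=
        fun μ => integral_nonneg (fun x => (f x).2)
      rw [hα, hβ, lintegral_finset_sum_measure, lintegral_finset_sum_measure]
      simp only [lintegral_smul_measure, smul_eq_mul]
      have hPt : ∀ i ∈ P, ENNReal.ofReal (g i) * ∫⁻ x, (f x : ℝ≥0∞) ∂(i : Measure X)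
          = ENNReal.ofReal (g i * ∫ x, f' x ∂(i : Measure X)) := by
        intro i hi
        rw [hlint _ (hPM i),
          ← ENNReal.ofReal_mul (le_of_lt (Finset.mem_filter.1 hi).2)]
      have hNt : ∀ i ∈ N, ENNReal.ofReal (-g i) * ∫⁻ x, (f x : ℝ≥0∞) ∂(i : Measure X)
          = ENNReal.ofReal ((-g i) * ∫ x, f' x ∂(i : Measure X)) := by
        intro i hi
        rw [hlint _ (hPM i),
          ← ENNReal.ofReal_mul (by linarith [(Finset.mem_filter.1 hi).2])]
      rw [Finset.sum_congr rfl hPt, Finset.sum_congr rfl hNt,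
        ← ENNReal.ofReal_sum_of_nonneg (fun i hi => ?_),
        ← ENNReal.ofReal_sum_of_nonneg (fun i hi => ?_)]
      rotate_left
      · exact mul_nonneg (by rcases Finset.mem_filter.1 hi with ⟨-, h⟩; linarith) (hnn _)
      · exact mul_nonneg (by rcases Finset.mem_filter.1 hi with ⟨-, h⟩; linarith) (hnn _)
      congr 1
      -- the real identity
      have hzero : ∑ i ∈ s, g i * ∫ x, f' x ∂(i : Measure X) = 0 := by
        rw [← hLf]
        exact hLzero f'
      have hsplit : ∑ i ∈ P, g i * ∫ x, f' x ∂(i : Measure X)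
          + ∑ i ∈ s.filter (fun i => ¬ 0 < g i), g i * ∫ x, f' x ∂(i : Measure X)
          = ∑ i ∈ s, g i * ∫ x, f' x ∂(i : Measure X) := by
        rw [hP]
        exact Finset.sum_filter_add_sum_filter_not s _ _
      have hrest : ∑ i ∈ s.filter (fun i => ¬ 0 < g i), g i * ∫ x, f' x ∂(i : Measure X)
          = ∑ i ∈ N, g i * ∫ x, f' x ∂(i : Measure X) := by
        refine (Finset.sum_subset ?_ ?_).symm
        · intro i hi
          rw [hN] at hi
          rw [Finset.mem_filter] at hi ⊢
          exact ⟨hi.1, by linarith [hi.2]⟩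
        · intro i hi hni
          rw [Finset.mem_filter] at hi
          rw [hN, Finset.mem_filter] at hni
          have hgi : g i = 0 := by
            by_contra hgi
            rcases lt_or_gt_of_ne hgi with h | h
            · exact hni ⟨hi.1, h⟩
            · exact hi.2 h
          rw [hgi, zero_mul]
      rw [hrest] at hsplit
      have : ∑ i ∈ N, (-g i) * ∫ x, f' x ∂(i : Measure X)
          = - ∑ i ∈ N, g i * ∫ x, f' x ∂(i : Measure X) := by
        rw [← Finset.sum_neg_distrib]
        exact Finset.sum_congr rfl fun i _ => by ring
      rw [this]
      linarith [hsplit, hzero]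
    -- evaluate at B
    have hαB1 : 0 < g i₀ → α B = ENNReal.ofReal (g i₀) := by
      intro hpos
      rw [hα, Measure.finset_sum_apply,
        Finset.sum_eq_single_of_mem i₀ (by rw [hP]; exact Finset.mem_filter.2 ⟨hi₀, hpos⟩)]
      · rw [Measure.smul_apply, hB1, smul_eq_mul, mul_one]
      · intro j hj hne
        have hjs : j ∈ s := by rw [hP] at hj; exact (Finset.mem_filter.1 hj).1
        rw [Measure.smul_apply, hBj j hjs hne, smul_zero]
    have hαB0 : ¬ 0 < g i₀ → α B = 0 := by
      intro hpos
      rw [hα, Measure.finset_sum_apply]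
      refine Finset.sum_eq_zero fun j hj => ?_
      have hj' : j ∈ s ∧ 0 < g j := by rw [hP] at hj; exact Finset.mem_filter.1 hj
      have hne : j ≠ i₀ := fun hEq => hpos (hEq ▸ hj'.2)
      rw [Measure.smul_apply, hBj j hj'.1 hne, smul_zero]
    have hβB1 : g i₀ < 0 → β B = ENNReal.ofReal (-g i₀) := by
      intro hneg
      rw [hβ, Measure.finset_sum_apply,
        Finset.sum_eq_single_of_mem i₀ (by rw [hN]; exact Finset.mem_filter.2 ⟨hi₀, hneg⟩)]
      · rw [Measure.smul_apply, hB1, smul_eq_mul, mul_one]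
      · intro j hj hne
        have hjs : j ∈ s := by rw [hN] at hj; exact (Finset.mem_filter.1 hj).1
        rw [Measure.smul_apply, hBj j hjs hne, smul_zero]
    have hβB0 : ¬ g i₀ < 0 → β B = 0 := by
      intro hneg
      rw [hβ, Measure.finset_sum_apply]
      refine Finset.sum_eq_zero fun j hj => ?_
      have hj' : j ∈ s ∧ g j < 0 := by rw [hN] at hj; exact Finset.mem_filter.1 hj
      have hne : j ≠ i₀ := fun hEq => hneg (hEq ▸ hj'.2)
      rw [Measure.smul_apply, hBj j hj'.1 hne, smul_zero]
    rcases lt_or_gt_of_ne hg0 with hneg | hpos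
    · have h1 : α B = 0 := hαB0 (not_lt.2 hneg.le)
      have h2 : β B = ENNReal.ofReal (-g i₀) := hβB1 hneg
      rw [hαβ, h2] at h1
      have := ENNReal.ofReal_eq_zero.1 h1
      linarith
    · have h1 : α B = ENNReal.ofReal (g i₀) := hαB1 hpos
      have h2 : β B = 0 := hβB0 (not_lt.2 hpos.le)
      rw [hαβ, h2] at h1
      have := ENNReal.ofReal_eq_zero.1 h1.symm
      linarith
  -- conclude the cardinality bound
  have hcard := hli.fintype_card_le_finrank
  rw [Module.finrank_pi] at hcard
  simpa [Fintype.card_coe] using hcard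

end Main

/-- If `F` is a finite generating family for a topological dynamical system `(X, T)`
(the linear span of `{f ∘ Tⁿ : f ∈ F, n ∈ ℤ}` is dense in `C(X)`), then the number of
ergodic `T`-invariant Borel probability measures on `X` is at most the cardinality of `F`. -/
theorem card_ergodic_le_card_generating_family
    {X : Type*} [MetricSpace X] [CompactSpace X] [MeasurableSpace X] [BorelSpace X]
    (T : X ≃ₜ X) (F : Finset C(X, ℝ))
    (hF : Dense (Submodule.span ℝ (iterSet T (F : Set C(X, ℝ))) : Set C(X, ℝ))) :
    {μ : Measure X | IsProbabilityMeasure μ ∧ Ergodic (⇑T) μ}.encard ≤ (F.card : ℕ∞) := by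
  classical
  set E := {μ : Measure X | IsProbabilityMeasure μ ∧ Ergodic (⇑T) μ} with hE
  have key : ∀ t : Finset (Measure X), ↑t ⊆ E → t.card ≤ F.card := by
    intro t hts
    exact card_le_of_subset_ergodic T F hF t fun μ hμ => hts (Finset.mem_coe.2 hμ)
  have hfin : E.Finite := by
    by_contra hinf
    obtain ⟨t, hts, hcard⟩ := (Set.Infinite.exists_subset_card_eq hinf) (F.card + 1)
    have := key t hts
    omega
  rw [hfin.encard_eq_coe_toFinset_card]
  exact_mod_cast key hfin.toFinset (by simp)
end

section
/- Let (X,T) be a topological dynamical system having only finitely many ergodic T-invariant Borel probability measures. Let F ⊆ C(X) be a finite set such that the closed linear span of {f ∘ Tⁿ : f ∈ F, n ∈ ℤ} ∪ B_T(X) equals C(X). Then the constant function 1 belongs to the closed linear span of {f ∘ Tⁿ : f ∈ F, n ∈ ℤ}. -/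
open MeasureTheory Filter Topology

/-- The set `B_T(X) = {φ ∘ T - φ : φ ∈ C(X)}` of continuous `T`-coboundaries. -/
def cobSet {X : Type*} [TopologicalSpace X] (T : X ≃ₜ X) : Set C(X, ℝ) :=
  {g | ∃ φ : C(X, ℝ), g = φ.comp (T : C(X, X)) - φ}

section aux
variable {X : Type*} [TopologicalSpace X]

lemma hiterN_succ_apply (T : X ≃ₜ X) (n : ℕ) (x : X) :
    hiterN T (n + 1) x = T (hiterN T n x) := rfl

lemma hiterN_comm (T : X ≃ₜ X) (n : ℕ) (x : X) :
    hiterN T n (T x) = T (hiterN T n x) := by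
  induction n with
  | zero => rfl
  | succ n ih => rw [hiterN_succ_apply, hiterN_succ_apply, ih]

lemma hiterN_symm_comm (T : X ≃ₜ X) (n : ℕ) (x : X) :
    (hiterN T n).symm (T x) = T ((hiterN T n).symm x) := by
  apply (hiterN T n).injective
  rw [Homeomorph.apply_symm_apply, hiterN_comm, Homeomorph.apply_symm_apply]

lemma hiter_comm (T : X ≃ₜ X) (m : ℤ) (x : X) :
    hiter T m (T x) = T (hiter T m x) := by
  cases m with
  | ofNat n => exact hiterN_comm T n x
  | negSucc n => exact hiterN_symm_comm T (n + 1) x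

lemma hiter_succ (T : X ≃ₜ X) (m : ℤ) (x : X) :
    hiter T (m + 1) x = T (hiter T m x) := by
  cases m with
  | ofNat n =>
      show hiter T (Int.ofNat (n + 1)) x = T (hiterN T n x)
      exact hiterN_succ_apply T n x
  | negSucc n =>
      cases n with
      | zero =>
          show hiter T 0 x = T ((hiterN T 1).symm x)
          show x = T ((hiterN T 1).symm x)
          apply (hiterN T 1).injective
          rw [hiterN_comm, Homeomorph.apply_symm_apply]
          rfl
      | succ k =>
          have h1 : Int.negSucc (k + 1) + 1 = Int.negSucc k := rfl
          rw [h1]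
          show (hiterN T (k + 1)).symm x = T (((hiterN T (k + 1)).trans T).symm x)
          rw [Homeomorph.symm_trans_apply, ← hiterN_symm_comm, Homeomorph.apply_symm_apply]

/-- Composition with a fixed continuous self-map, as a continuous linear map on `C(X, ℝ)`. -/
noncomputable def compCLM [CompactSpace X] (g : C(X, X)) : C(X, ℝ) →L[ℝ] C(X, ℝ) :=
  LinearMap.mkContinuous
    { toFun := fun f => f.comp g
      map_add' := fun f₁ f₂ => by ext x; simp
      map_smul' := fun c f => by ext x; simp } 1
    fun f => by
      rw [one_mul]
      exact (ContinuousMap.norm_le _ (norm_nonneg f)).mpr fun x => f.norm_coe_le_norm (g x)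

lemma compCLM_apply [CompactSpace X] (g : C(X, X)) (f : C(X, ℝ)) :
    compCLM g f = f.comp g := rfl

lemma compCLM_norm_le [CompactSpace X] (g : C(X, X)) : ‖compCLM (X := X) g‖ ≤ 1 :=
  LinearMap.mkContinuous_norm_le _ zero_le_one _

end aux


/-- Abstract core: if `Λ`-averages along a power-bounded operator `U` exist, a vector `e`
fixed by `U` lies in the closed span of a `U`-invariant set `s`, provided the span of `s`
together with the `U`-coboundaries is dense. -/
lemma aux_one_mem {E : Type*} [NormedAddCommGroup E] [NormedSpace ℝ E]
    (U : E →L[ℝ] E) (hU : ‖U‖ ≤ 1) (e : E) (he : U e = e)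
    (s : Set E) (hUs : ∀ g ∈ s, U g ∈ s)
    (hdense : closure (Submodule.span ℝ (s ∪ {g | ∃ φ : E, g = U φ - φ}) : Set E)
      = Set.univ) :
    e ∈ closure (Submodule.span ℝ s : Set E) := by
  classical
  by_contra h1
  set S : Submodule ℝ E := Submodule.span ℝ s with hSdef
  obtain ⟨f, u, hfu, huf⟩ :=
    geometric_hahn_banach_closed_point (S.convex.closure) isClosed_closure h1
  have hu_pos : 0 < u := by
    have := hfu 0 (subset_closure S.zero_mem)
    simpa using this
  have hfS : ∀ g ∈ (S : Set E), f g = 0 := by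
    intro g hg
    by_contra hne
    have hval : f (((u + 1) / f g) • g) = u + 1 := by
      rw [f.map_smul, smul_eq_mul, div_mul_cancel₀ _ hne]
    have := hfu _ (subset_closure (S.smul_mem ((u + 1) / f g) hg))
    rw [hval] at this
    linarith
  have hfe : 0 < f e := lt_trans hu_pos huf
  set Λ : StrongDual ℝ E := (f e)⁻¹ • f with hΛdef
  have hΛe : Λ e = 1 := by
    simp only [hΛdef, ContinuousLinearMap.smul_apply, smul_eq_mul]
    exact inv_mul_cancel₀ (ne_of_gt hfe)
  have hΛS : ∀ g ∈ (S : Set E), Λ g = 0 := fun g hg => by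
    simp [hΛdef, hfS g hg]
  -- U and its powers preserve S
  have hUS : ∀ g ∈ (S : Set E), U g ∈ (S : Set E) := by
    intro g hg
    have hmap : S.map (U : E →ₗ[ℝ] E) ≤ S := by
      rw [hSdef, Submodule.map_span, Submodule.span_le]
      rintro _ ⟨h, hh, rfl⟩
      exact Submodule.subset_span (hUs h hh)
    exact hmap ⟨g, hg, rfl⟩
  have hpowS : ∀ (n : ℕ), ∀ g ∈ (S : Set E), (U ^ n) g ∈ (S : Set E) := by
    intro n
    induction n with
    | zero => intro g hg; simpa using hg
    | succ n ih =>
        intro g hg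
        rw [pow_succ, ContinuousLinearMap.mul_apply]
        exact ih _ (hUS g hg)
  have hpowe : ∀ n : ℕ, (U ^ n) e = e := by
    intro n
    induction n with
    | zero => simp
    | succ n ih => rw [pow_succ, ContinuousLinearMap.mul_apply, he, ih]
  have hpownorm : ∀ n : ℕ, ‖(U ^ n : E →L[ℝ] E)‖ ≤ 1 := by
    intro n
    induction n with
    | zero => rw [pow_zero]; exact ContinuousLinearMap.norm_id_le
    | succ n ih =>
        calc ‖(U ^ (n + 1) : E →L[ℝ] E)‖ = ‖(U ^ n) * U‖ := by rw [pow_succ]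
          _ ≤ ‖(U ^ n : E →L[ℝ] E)‖ * ‖U‖ := norm_mul_le _ _
          _ ≤ 1 * 1 := mul_le_mul ih hU (norm_nonneg _) zero_le_one
          _ = 1 := one_mul 1
  -- averaged functionals
  set A : ℕ → StrongDual ℝ E := fun N =>
    ((N : ℝ) + 1)⁻¹ • ∑ n ∈ Finset.range (N + 1), Λ.comp (U ^ n) with hAdef
  have hA_apply : ∀ N g, A N g =
      ((N : ℝ) + 1)⁻¹ * ∑ n ∈ Finset.range (N + 1), Λ ((U ^ n) g) := by
    intro N g
    simp [hAdef, ContinuousLinearMap.smul_apply, ContinuousLinearMap.sum_apply,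
      ContinuousLinearMap.comp_apply, smul_eq_mul]
  have hA_norm : ∀ N, ‖A N‖ ≤ ‖Λ‖ := by
    intro N
    have hterm : ∀ n : ℕ, ‖Λ.comp (U ^ n)‖ ≤ ‖Λ‖ := fun n =>
      (ContinuousLinearMap.opNorm_comp_le _ _).trans
        (by nlinarith [hpownorm n, norm_nonneg Λ, norm_nonneg (U ^ n : E →L[ℝ] E)])
    have hsum : ‖∑ n ∈ Finset.range (N + 1), Λ.comp (U ^ n)‖ ≤ ((N : ℝ) + 1) * ‖Λ‖ := by
      calc ‖∑ n ∈ Finset.range (N + 1), Λ.comp (U ^ n)‖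
          ≤ ∑ n ∈ Finset.range (N + 1), ‖Λ.comp (U ^ n)‖ := norm_sum_le _ _
        _ ≤ ∑ _n ∈ Finset.range (N + 1), ‖Λ‖ := Finset.sum_le_sum fun n _ => hterm n
        _ = ((N : ℝ) + 1) * ‖Λ‖ := by
            rw [Finset.sum_const, Finset.card_range, nsmul_eq_mul]; push_cast; ring
    have hc : (0 : ℝ) < (N : ℝ) + 1 := by positivity
    rw [hAdef]
    simp only []
    rw [norm_smul, Real.norm_eq_abs, abs_of_pos (inv_pos.mpr hc)]
    calc ((N : ℝ) + 1)⁻¹ * ‖∑ n ∈ Finset.range (N + 1), Λ.comp (U ^ n)‖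
        ≤ ((N : ℝ) + 1)⁻¹ * (((N : ℝ) + 1) * ‖Λ‖) :=
          mul_le_mul_of_nonneg_left hsum (by positivity)
      _ = ‖Λ‖ := by field_simp
  have hA_e : ∀ N, A N e = 1 := by
    intro N
    rw [hA_apply]
    have : ∀ n ∈ Finset.range (N + 1), Λ ((U ^ n) e) = 1 := by
      intro n _; rw [hpowe n, hΛe]
    rw [Finset.sum_congr rfl this, Finset.sum_const, Finset.card_range, nsmul_eq_mul, mul_one]
    have hc : ((N : ℝ) + 1) ≠ 0 := by positivity
    push_cast
    field_simp
  have hA_S : ∀ N, ∀ g ∈ (S : Set E), A N g = 0 := by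
    intro N g hg
    rw [hA_apply]
    have : ∀ n ∈ Finset.range (N + 1), Λ ((U ^ n) g) = 0 := fun n _ =>
      hΛS _ (hpowS n g hg)
    rw [Finset.sum_congr rfl this]
    simp
  -- telescoping on coboundaries
  have hA_cob : ∀ φ : E,
      Tendsto (fun N => A N (U φ - φ)) atTop (nhds 0) := by
    intro φ
    set a : ℕ → ℝ := fun n => Λ ((U ^ n) φ) with hadef
    have hAval : ∀ N, A N (U φ - φ) = ((N : ℝ) + 1)⁻¹ * (a (N + 1) - a 0) := by
      intro N
      rw [hA_apply]
      congr 1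
      have hterm : ∀ n : ℕ, Λ ((U ^ n) (U φ - φ)) = a (n + 1) - a n := by
        intro n
        have h1 : (U ^ n) (U φ - φ) = (U ^ (n + 1)) φ - (U ^ n) φ := by
          rw [map_sub, pow_succ, ContinuousLinearMap.mul_apply]
        rw [h1, map_sub]
      rw [Finset.sum_congr rfl fun n _ => hterm n]
      exact Finset.sum_range_sub a (N + 1)
    have habd : ∀ n, |a n| ≤ ‖Λ‖ * ‖φ‖ := by
      intro n
      calc |a n| = ‖Λ ((U ^ n) φ)‖ := rfl
        _ ≤ ‖Λ‖ * ‖(U ^ n) φ‖ := Λ.le_opNorm _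
        _ ≤ ‖Λ‖ * ‖φ‖ := by
            refine mul_le_mul_of_nonneg_left ?_ (norm_nonneg _)
            calc ‖(U ^ n) φ‖ ≤ ‖(U ^ n : E →L[ℝ] E)‖ * ‖φ‖ :=
                  (U ^ n).le_opNorm _
              _ ≤ 1 * ‖φ‖ := mul_le_mul_of_nonneg_right (hpownorm n) (norm_nonneg _)
              _ = ‖φ‖ := one_mul _
    have hbound : ∀ N, ‖A N (U φ - φ)‖ ≤ (2 * (‖Λ‖ * ‖φ‖)) * (1 / ((N : ℝ) + 1)) := by
      intro N
      rw [hAval]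
      have hc : (0 : ℝ) < (N : ℝ) + 1 := by positivity
      rw [Real.norm_eq_abs, abs_mul, abs_of_pos (inv_pos.mpr hc)]
      have hab : |a (N + 1) - a 0| ≤ 2 * (‖Λ‖ * ‖φ‖) := by
        have h1 := habd (N + 1)
        have h2 := habd 0
        calc |a (N + 1) - a 0| ≤ |a (N + 1)| + |a 0| := abs_sub _ _
          _ ≤ 2 * (‖Λ‖ * ‖φ‖) := by linarith
      calc ((N : ℝ) + 1)⁻¹ * |a (N + 1) - a 0|
          ≤ ((N : ℝ) + 1)⁻¹ * (2 * (‖Λ‖ * ‖φ‖)) :=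
            mul_le_mul_of_nonneg_left hab (by positivity)
        _ = (2 * (‖Λ‖ * ‖φ‖)) * (1 / ((N : ℝ) + 1)) := by ring
    have hlim : Tendsto (fun N : ℕ => (2 * (‖Λ‖ * ‖φ‖)) * (1 / ((N : ℝ) + 1)))
        atTop (nhds 0) := by
      have := tendsto_one_div_add_atTop_nhds_zero_nat (𝕜 := ℝ)
      simpa using this.const_mul (2 * (‖Λ‖ * ‖φ‖))
    exact squeeze_zero_norm hbound hlim
  -- weak-* cluster point
  set w : ℕ → WeakDual ℝ E := fun N => StrongDual.toWeakDual (A N) with hwdef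
  have hwK : ∀ N, w N ∈ WeakDual.toStrongDual ⁻¹'
      Metric.closedBall (0 : StrongDual ℝ E) ‖Λ‖ := by
    intro N
    simp only [Set.mem_preimage, Metric.mem_closedBall, dist_zero_right]
    exact hA_norm N
  obtain ⟨Linf, _, hcl⟩ := (WeakDual.isCompact_closedBall
      (0 : StrongDual ℝ E) ‖Λ‖).exists_clusterPt
    (f := Filter.map w atTop)
    (le_principal_iff.mpr (Filter.mem_map.mpr (Eventually.of_forall hwK)))
  have key : ∀ g : E, ClusterPt (Linf g) (Filter.map (fun N => A N g) atTop) := by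
    intro g
    have hc : ContinuousAt (fun x' : WeakDual ℝ E => x' g) Linf :=
      (WeakDual.eval_continuous g).continuousAt
    have := hcl.map hc (Filter.tendsto_map (f := fun x' : WeakDual ℝ E => x' g))
    rwa [Filter.map_map] at this
  have hLinfS : ∀ g ∈ (S : Set E), Linf g = 0 := by
    intro g hg
    have hconst : Filter.map (fun N => A N g) atTop ≤ Filter.principal {(0 : ℝ)} := by
      rw [Filter.le_principal_iff, Filter.mem_map]
      exact Eventually.of_forall fun N => hA_S N g hg
    have hmem := mem_closure_iff_clusterPt.mpr ((key g).mono hconst)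
    rwa [closure_singleton, Set.mem_singleton_iff] at hmem
  have hLinfe : Linf e = 1 := by
    have hconst : Filter.map (fun N => A N e) atTop ≤ Filter.principal {(1 : ℝ)} := by
      rw [Filter.le_principal_iff, Filter.mem_map]
      exact Eventually.of_forall fun N => hA_e N
    have hmem := mem_closure_iff_clusterPt.mpr ((key e).mono hconst)
    rwa [closure_singleton, Set.mem_singleton_iff] at hmem
  have hLinfCob : ∀ g ∈ {g | ∃ φ : E, g = U φ - φ}, Linf g = 0 := by
    rintro g ⟨φ, rfl⟩
    exact eq_of_nhds_neBot ((key (U φ - φ)).mono (hA_cob φ))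
  -- conclude
  set B : E →L[ℝ] ℝ := WeakDual.toStrongDual Linf with hBdef
  have hBapp : ∀ g, B g = Linf g := fun g => rfl
  have hspan : (Submodule.span ℝ (s ∪ {g | ∃ φ : E, g = U φ - φ}) : Set E)
      ⊆ (B.ker : Set E) := by
    rw [SetLike.coe_subset_coe, Submodule.span_le]
    rintro g (hg | hg)
    · exact LinearMap.mem_ker.mpr (hLinfS g (Submodule.subset_span hg))
    · exact LinearMap.mem_ker.mpr (hLinfCob g hg)
  have hall : closure (Submodule.span ℝ (s ∪ {g | ∃ φ : E, g = U φ - φ}) : Set E)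
      ⊆ (B.ker : Set E) :=
    closure_minimal hspan (ContinuousLinearMap.isClosed_ker B)
  rw [hdense] at hall
  have : B e = 0 := hall (Set.mem_univ e)
  rw [hBapp, hLinfe] at this
  exact one_ne_zero this


/-- Let `(X, T)` be a topological dynamical system with only finitely many ergodic
`T`-invariant Borel probability measures.  If `F ⊆ C(X)` is a finite set such that the
closed linear span of `{f ∘ Tⁿ : f ∈ F, n ∈ ℤ} ∪ B_T(X)` is all of `C(X)`, then the
constant function `1` belongs to the closed linear span of `{f ∘ Tⁿ : f ∈ F, n ∈ ℤ}`. -/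
theorem one_mem_closure_span_iterates
    {X : Type*} [MetricSpace X] [CompactSpace X] [MeasurableSpace X] [BorelSpace X]
    (T : X ≃ₜ X)
    (hfin : {μ : Measure X | IsProbabilityMeasure μ ∧ Ergodic (⇑T) μ}.Finite)
    (F : Finset C(X, ℝ))
    (hF : closure (Submodule.span ℝ (iterSet T (F : Set C(X, ℝ)) ∪ cobSet T) : Set C(X, ℝ))
      = Set.univ) :
    (1 : C(X, ℝ)) ∈
      closure (Submodule.span ℝ (iterSet T (F : Set C(X, ℝ))) : Set C(X, ℝ)) := by
  have hU : ‖compCLM ((T : C(X, X)))‖ ≤ 1 := compCLM_norm_le _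
  have he : compCLM ((T : C(X, X))) (1 : C(X, ℝ)) = 1 := by ext x; rfl
  have hUs : ∀ g ∈ iterSet T (F : Set C(X, ℝ)),
      compCLM ((T : C(X, X))) g ∈ iterSet T (F : Set C(X, ℝ)) := by
    rintro g ⟨f0, hf0, m, rfl⟩
    refine ⟨f0, hf0, m + 1, ?_⟩
    ext x
    show f0 (hiter T m (T x)) = f0 (hiter T (m + 1) x)
    rw [hiter_comm, hiter_succ]
  have hcob : cobSet T = {g | ∃ φ : C(X, ℝ), g = compCLM ((T : C(X, X))) φ - φ} := rfl
  exact aux_one_mem (compCLM ((T : C(X, X)))) hU 1 he (iterSet T (F : Set C(X, ℝ))) hUs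
    (by rw [← hcob]; exact hF)
end

section
/- Let G be a compact metrizable abelian topological group and let g ∈ G be such that the translation τ : x ↦ x + g is a minimal homeomorphism of G (equivalently, {n·g : n ∈ ℤ} is dense in G). Then there exists f ∈ C(G) such that the linear span of {f ∘ τⁿ : n ∈ ℤ} is dense in C(G); that is, τ is topologically simple (Mult(τ) = 1). -/
set_option linter.unusedSectionVars false
set_option maxHeartbeats 1000000

open MeasureTheory TopologicalSpace

namespace MTTS

/-- Hahn–Banach density criterion. -/
theorem dense_span_of_dual {X : Type*} [NormedAddCommGroup X] [NormedSpace ℝ X] {s : Set X}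
    (h : ∀ Λ : X →L[ℝ] ℝ, (∀ x ∈ s, Λ x = 0) → Λ = 0) :
    Dense (Submodule.span ℝ s : Set X) := by
  by_contra hd
  rw [Dense] at hd
  push_neg at hd
  obtain ⟨x, hx⟩ := hd
  obtain ⟨Λ, u, hΛ1, hΛ2⟩ :=
    geometric_hahn_banach_closed_point
      ((Submodule.span ℝ s).convex.closure) isClosed_closure hx
  have key : ∀ y ∈ Submodule.span ℝ s, Λ y = 0 := by
    intro y hy
    by_contra hne
    have h1 := hΛ1 (((u + 1) / Λ y) • y)
      (subset_closure (Submodule.smul_mem _ _ hy))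
    rw [_root_.map_smul, smul_eq_mul, div_mul_cancel₀ _ hne] at h1
    linarith
  have hΛ0 : Λ = 0 := h Λ fun x hx => key x (Submodule.subset_span hx)
  have h0 : Λ 0 < u := hΛ1 0 (subset_closure (Submodule.zero_mem _))
  rw [hΛ0] at h0 hΛ2
  simp only [ContinuousLinearMap.zero_apply] at h0 hΛ2
  linarith

lemma summable_geom_bound {E : Type*} [NormedAddCommGroup E] [CompleteSpace E] {u : ℕ → E}
    (C : ℝ) (h : ∀ k, ‖u k‖ ≤ C * (1 / 2 : ℝ) ^ k) : Summable u :=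
  Summable.of_norm (Summable.of_nonneg_of_le (fun k => norm_nonneg _) h
    (summable_geometric_two.mul_left C))

section Grp

variable {G : Type*} [AddCommGroup G] [TopologicalSpace G] [IsTopologicalAddGroup G]
  [CompactSpace G]

/-- The family of translates of `F`: `trF F t = F (· + t)`. -/
noncomputable def trF (F : C(G, ℝ)) : C(G, C(G, ℝ)) :=
  ContinuousMap.curry ⟨fun p => F (p.2 + p.1), F.continuous.comp (continuous_snd.add continuous_fst)⟩

@[simp] lemma trF_apply (F : C(G, ℝ)) (t x : G) : trF F t x = F (x + t) := rfl

lemma norm_trF_le (F : C(G, ℝ)) (t : G) : ‖trF F t‖ ≤ ‖F‖ := by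
  refine (ContinuousMap.norm_le _ (norm_nonneg F)).mpr fun x => ?_
  simpa using F.norm_coe_le_norm (x + t)

/-- Translation by `y` as a continuous linear map on `C(G,ℝ)`. -/
noncomputable def RR (y : G) : C(G, ℝ) →L[ℝ] C(G, ℝ) :=
  LinearMap.mkContinuous
    { toFun := fun F => trF F y
      map_add' := fun F F' => by ext x; simp
      map_smul' := fun c F => by ext x; simp }
    1 (fun F => by simpa using norm_trF_le F y)

@[simp] lemma RR_apply (y : G) (F : C(G, ℝ)) (x : G) : RR y F x = F (x + y) := rfl

lemma RR_eq_trF (y : G) (F : C(G, ℝ)) : RR y F = trF F y := rfl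

@[simp] lemma RR_one (y : G) : RR y (1 : C(G, ℝ)) = 1 := by ext x; simp

@[simp] lemma trF_zero (F : C(G, ℝ)) : trF F 0 = F := by ext x; simp

end Grp

section Meas

variable {G : Type*} [AddCommGroup G] [TopologicalSpace G] [IsTopologicalAddGroup G]
  [CompactSpace G] [T2Space G] [SecondCountableTopology G] [MeasurableSpace G] [BorelSpace G]
  (lam : Measure G) [IsProbabilityMeasure lam]

lemma cont_integrable {E : Type*} [NormedAddCommGroup E] {u : G → E} (hu : Continuous u) :
    Integrable u lam :=
  hu.integrable_of_hasCompactSupport (HasCompactSupport.of_compactSpace u)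

/-- Integration against `lam` as a continuous linear map. -/
noncomputable def ICLM : C(G, ℝ) →L[ℝ] ℝ :=
  LinearMap.mkContinuous
    { toFun := fun F => ∫ t, F t ∂lam
      map_add' := fun F F' => integral_add (cont_integrable lam F.continuous)
        (cont_integrable lam F'.continuous)
      map_smul' := fun c F => integral_smul c _ }
    1 (fun F => by
      rw [one_mul]
      calc ‖∫ t, F t ∂lam‖ ≤ ‖F‖ * (lam Set.univ).toReal :=
            norm_integral_le_of_norm_le_const
              (Filter.Eventually.of_forall fun t => F.norm_coe_le_norm t)
        _ = ‖F‖ := by simp)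

@[simp] lemma ICLM_apply (F : C(G, ℝ)) : ICLM lam F = ∫ t, F t ∂lam := rfl

@[simp] lemma ICLM_one : ICLM lam (1 : C(G, ℝ)) = 1 := by simp

/-- Evaluation of a Bochner integral in `C(G,ℝ)`. -/
lemma integral_apply' {u : G → C(G, ℝ)} (hu : Continuous u) (x : G) :
    (∫ t, u t ∂lam) x = ∫ t, u t x ∂lam := by
  have := (ContinuousMap.evalCLM ℝ x).integral_comp_comm (cont_integrable lam hu)
  simpa [ContinuousMap.evalCLM] using this.symm

variable (ψ : ℕ → C(G, ℝ))

noncomputable def ck (k : ℕ) : ℝ := (1 / 2 : ℝ) ^ k * ((‖ψ k‖ + 1) ^ 2)⁻¹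

lemma ck_pos (k : ℕ) : 0 < ck ψ k := by
  have h1 : (0:ℝ) < ‖ψ k‖ + 1 := by positivity
  unfold ck; positivity

lemma ck_mul_le (k : ℕ) {B : ℝ} (hB : |B| ≤ (‖ψ k‖ + 1) ^ 2) :
    |ck ψ k * B| ≤ (1 / 2 : ℝ) ^ k := by
  have h1 : (0:ℝ) < ‖ψ k‖ + 1 := by positivity
  have h2 : (0:ℝ) < ((‖ψ k‖ + 1) ^ 2) := by positivity
  rw [abs_mul, abs_of_pos (ck_pos ψ k)]
  unfold ck
  rw [mul_assoc]
  calc (1/2:ℝ)^k * (((‖ψ k‖ + 1) ^ 2)⁻¹ * |B|) ≤ (1/2:ℝ)^k * (((‖ψ k‖ + 1) ^ 2)⁻¹ * ((‖ψ k‖ + 1) ^ 2)) := by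
        have := mul_le_mul_of_nonneg_left hB (le_of_lt (inv_pos.mpr h2))
        have h3 : (0:ℝ) ≤ (1/2:ℝ)^k := by positivity
        exact mul_le_mul_of_nonneg_left this h3
    _ = (1/2:ℝ)^k := by field_simp

noncomputable def mk (k : ℕ) : ℝ := ∫ t, ψ k t ∂lam

noncomputable def ak (k : ℕ) : ℝ := ∫ t, (ψ k t) ^ 2 ∂lam

noncomputable def qk (k : ℕ) : C(G, ℝ) := ∫ t, (ψ k t) • trF (ψ k) t ∂lam

lemma cont_smul_trF (k : ℕ) (w : C(G,ℝ)) :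
    Continuous fun t : G => (w t) • trF (ψ k) t :=
  (w.continuous).smul (map_continuous (trF (ψ k)))

lemma abs_mk_le (k : ℕ) : |mk lam ψ k| ≤ ‖ψ k‖ := by
  have h : ‖∫ t, ψ k t ∂lam‖ ≤ ‖ψ k‖ * (lam Set.univ).toReal :=
    norm_integral_le_of_norm_le_const
      (Filter.Eventually.of_forall fun t => (ψ k).norm_coe_le_norm t)
  unfold mk
  rw [← Real.norm_eq_abs]
  simpa using h

lemma abs_ak_le (k : ℕ) : |ak lam ψ k| ≤ ‖ψ k‖ ^ 2 := by
  have h : ‖∫ t, (ψ k t) ^ 2 ∂lam‖ ≤ ‖ψ k‖ ^ 2 * (lam Set.univ).toReal := by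
    refine norm_integral_le_of_norm_le_const (Filter.Eventually.of_forall fun t => ?_)
    have h1 := (ψ k).norm_coe_le_norm t
    have h2 : (0:ℝ) ≤ ‖(ψ k) t‖ := norm_nonneg _
    calc ‖(ψ k t) ^ 2‖ = ‖ψ k t‖ ^ 2 := by rw [norm_pow]
      _ ≤ ‖ψ k‖ ^ 2 := by nlinarith
  unfold ak
  rw [← Real.norm_eq_abs]
  simpa using h

lemma norm_qk_le (k : ℕ) : ‖qk lam ψ k‖ ≤ ‖ψ k‖ ^ 2 := by
  have h : ‖∫ t, (ψ k t) • trF (ψ k) t ∂lam‖ ≤ ‖ψ k‖ ^ 2 * (lam Set.univ).toReal := by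
    refine norm_integral_le_of_norm_le_const (Filter.Eventually.of_forall fun t => ?_)
    calc ‖(ψ k t) • trF (ψ k) t‖ ≤ ‖ψ k t‖ * ‖trF (ψ k) t‖ := norm_smul_le (ψ k t) (trF (ψ k) t)
      _ ≤ ‖ψ k‖ ^ 2 := by
          rw [sq]
          exact mul_le_mul ((ψ k).norm_coe_le_norm t) (norm_trF_le (ψ k) t)
            (norm_nonneg _) (norm_nonneg _)
  unfold qk
  simpa using h

lemma summable_fam : Summable fun k => ck ψ k • (ak lam ψ k • (1 : C(G,ℝ)) - qk lam ψ k) := by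
  refine summable_geom_bound 2 fun k => ?_
  have h1 : ‖ak lam ψ k • (1 : C(G,ℝ)) - qk lam ψ k‖ ≤ 2 * (‖ψ k‖ + 1) ^ 2 := by
    have hb : ‖ψ k‖ ^ 2 ≤ (‖ψ k‖ + 1) ^ 2 := by nlinarith [norm_nonneg (ψ k)]
    have h2 : ‖ak lam ψ k • (1 : C(G,ℝ))‖ ≤ (‖ψ k‖ + 1) ^ 2 := by
      calc ‖ak lam ψ k • (1 : C(G,ℝ))‖ ≤ ‖ak lam ψ k‖ * ‖(1 : C(G,ℝ))‖ := norm_smul_le (ak lam ψ k) (1 : C(G,ℝ))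
        _ ≤ |ak lam ψ k| * 1 := by
            refine mul_le_mul_of_nonneg_left ?_ (abs_nonneg _)
            refine (ContinuousMap.norm_le _ (by norm_num)).mpr fun x => by simp
        _ ≤ (‖ψ k‖ + 1) ^ 2 := by
            rw [mul_one]; exact (abs_ak_le lam ψ k).trans hb
    have h3 := (norm_qk_le lam ψ k).trans hb
    calc ‖ak lam ψ k • (1 : C(G,ℝ)) - qk lam ψ k‖
        ≤ ‖ak lam ψ k • (1 : C(G,ℝ))‖ + ‖qk lam ψ k‖ := norm_sub_le _ _
      _ ≤ 2 * (‖ψ k‖ + 1) ^ 2 := by linarith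
  calc ‖ck ψ k • (ak lam ψ k • (1 : C(G,ℝ)) - qk lam ψ k)‖
      = ck ψ k * ‖ak lam ψ k • (1 : C(G,ℝ)) - qk lam ψ k‖ := by
        have h4 := norm_smul (ck ψ k) (ak lam ψ k • (1 : C(G,ℝ)) - qk lam ψ k)
        rw [h4, Real.norm_eq_abs, abs_of_pos (ck_pos ψ k)]
    _ ≤ ck ψ k * (2 * (‖ψ k‖ + 1) ^ 2) := by
        exact mul_le_mul_of_nonneg_left h1 (le_of_lt (ck_pos ψ k))
    _ = 2 * (ck ψ k * (‖ψ k‖ + 1) ^ 2) := by ring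
    _ ≤ 2 * (1/2:ℝ)^k := by
        have := ck_mul_le ψ k (B := (‖ψ k‖ + 1) ^ 2) (by
          rw [abs_of_pos (by positivity)])
        rw [abs_mul, abs_of_pos (ck_pos ψ k), abs_of_pos (by positivity : (0:ℝ) < (‖ψ k‖ + 1)^2)] at this
        exact mul_le_mul_of_nonneg_left this (by norm_num)

/-- The cyclic function. -/
noncomputable def fdef : C(G, ℝ) :=
  1 + ∑' k, ck ψ k • (ak lam ψ k • (1 : C(G,ℝ)) - qk lam ψ k)

variable [lam.IsAddLeftInvariant]

lemma lemRq (k : ℕ) (z : G) :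
    RR (-z) (qk lam ψ k) = ∫ t, (ψ k (t + z)) • trF (ψ k) t ∂lam := by
  ext x
  have hu2 : Continuous fun t : G => (ψ k (t + z)) • trF (ψ k) t :=
    ((ψ k).continuous.comp (continuous_id.add continuous_const)).smul
      (map_continuous (trF (ψ k)))
  have e1 : (RR (-z) (qk lam ψ k)) x = ∫ t, ψ k t * ψ k ((x + -z) + t) ∂lam := by
    rw [RR_apply]
    unfold qk
    rw [integral_apply' lam (cont_smul_trF ψ k (ψ k))]
    simp
  have e2 : (∫ t, (ψ k (t + z)) • trF (ψ k) t ∂lam) x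
      = ∫ t, ψ k (t + z) * ψ k (x + t) ∂lam := by
    rw [integral_apply' lam hu2]
    simp
  rw [e1, e2]
  have e3 := (integral_add_right_eq_self (μ := lam)
    (fun t => ψ k t * ψ k ((x + -z) + t)) z).symm
  rw [e3]
  congr 1
  funext t
  have : (x + -z) + (t + z) = x + t := by abel
  rw [this]

lemma ICLM_trF (k : ℕ) (t : G) : ICLM lam (trF (ψ k) t) = mk lam ψ k := by
  rw [ICLM_apply]
  unfold mk
  have : ∀ u : G, trF (ψ k) t u = ψ k (u + t) := fun u => rfl
  simp_rw [this]
  exact integral_add_right_eq_self (μ := lam) (fun u => ψ k u) t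

lemma trF_integral (k : ℕ) : (∫ t, trF (ψ k) t ∂lam) = mk lam ψ k • (1 : C(G,ℝ)) := by
  ext x
  rw [integral_apply' lam (map_continuous (trF (ψ k)))]
  simp only [trF_apply, ContinuousMap.smul_apply, ContinuousMap.one_apply, smul_eq_mul, mul_one]
  unfold mk
  exact integral_add_left_eq_self (μ := lam) (fun u => ψ k u) x

lemma ak_sub_mk_sq_nonneg (k : ℕ) : mk lam ψ k ^ 2 ≤ ak lam ψ k := by
  have key : ak lam ψ k - mk lam ψ k ^ 2 = ∫ t, (ψ k t - mk lam ψ k) ^ 2 ∂lam := by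
    have e : (fun t => (ψ k t - mk lam ψ k) ^ 2)
        = fun t => ((ψ k t) ^ 2 - (2 * mk lam ψ k) * (ψ k t)) + mk lam ψ k ^ 2 := by
      funext t; ring
    rw [e]
    have i1 : Integrable (fun t => (ψ k t) ^ 2) lam :=
      cont_integrable lam (by continuity)
    have i2 : Integrable (fun t => (2 * mk lam ψ k) * (ψ k t)) lam :=
      cont_integrable lam (by continuity)
    have i3 : Integrable (fun t => (ψ k t) ^ 2 - (2 * mk lam ψ k) * (ψ k t)) lam := i1.sub i2
    rw [integral_add i3 (integrable_const _), integral_sub i1 i2,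
      integral_const_mul, integral_const]
    have : lam.real Set.univ = 1 := by simp
    rw [this, one_smul]
    unfold ak mk
    ring
  have pos : 0 ≤ ∫ t, (ψ k t - mk lam ψ k) ^ 2 ∂lam :=
    integral_nonneg fun t => sq_nonneg _
  linarith [key ▸ pos]

theorem dual_vanish (hψ : DenseRange ψ) [lam.IsOpenPosMeasure]
    (Λ : C(G,ℝ) →L[ℝ] ℝ) (h0 : ∀ z : G, Λ (RR (-z) (fdef lam ψ)) = 0) : Λ = 0 := by
  classical
  set c := ck ψ with hc
  set m := mk lam ψ with hm
  set a := ak lam ψ with ha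
  -- the functions h_k
  set hkf : ℕ → G → ℝ := fun k t => Λ (trF (ψ k) t) with hhkf
  have hk_cont : ∀ k, Continuous (hkf k) :=
    fun k => Λ.continuous.comp (map_continuous (trF (ψ k)))
  have hk_bd : ∀ k t, |hkf k t| ≤ ‖Λ‖ * ‖ψ k‖ := by
    intro k t
    calc |hkf k t| ≤ ‖Λ‖ * ‖trF (ψ k) t‖ := Λ.le_opNorm _
      _ ≤ ‖Λ‖ * ‖ψ k‖ := mul_le_mul_of_nonneg_left (norm_trF_le _ _) (norm_nonneg Λ)
  -- the elements W_k
  set Wk : ℕ → C(G,ℝ) := fun k => ∫ t, hkf k t • trF (ψ k) t ∂lam with hWk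
  have Wk_cont : ∀ k, Continuous fun t : G => hkf k t • trF (ψ k) t :=
    fun k => (hk_cont k).smul (map_continuous (trF (ψ k)))
  have Wk_norm : ∀ k, ‖Wk k‖ ≤ ‖Λ‖ * ‖ψ k‖ ^ 2 := by
    intro k
    have h : ‖∫ t, hkf k t • trF (ψ k) t ∂lam‖ ≤ (‖Λ‖ * ‖ψ k‖ ^ 2) * (lam Set.univ).toReal := by
      refine norm_integral_le_of_norm_le_const (Filter.Eventually.of_forall fun t => ?_)
      calc ‖hkf k t • trF (ψ k) t‖ ≤ ‖hkf k t‖ * ‖trF (ψ k) t‖ :=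
            norm_smul_le (hkf k t) (trF (ψ k) t)
        _ ≤ (‖Λ‖ * ‖ψ k‖) * ‖ψ k‖ := by
            refine mul_le_mul ?_ (norm_trF_le _ _) (norm_nonneg _) ?_
            · exact hk_bd k t
            · positivity
        _ = ‖Λ‖ * ‖ψ k‖ ^ 2 := by ring
    rw [hWk]
    simpa using h
  have evalWk : ∀ k z, Wk k z = ∫ t, hkf k t * ψ k (z + t) ∂lam := by
    intro k z
    rw [hWk]
    rw [integral_apply' lam (Wk_cont k)]
    simp
  have LamWk : ∀ k, Λ (Wk k) = ∫ t, hkf k t * hkf k t ∂lam := by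
    intro k
    rw [hWk]
    rw [← Λ.integral_comp_comm (cont_integrable lam (Wk_cont k))]
    congr 1
    funext t
    rw [_root_.map_smul, smul_eq_mul]
  have IWk : ∀ k, ICLM lam (Wk k) = m k * (m k * Λ 1) := by
    intro k
    have e1 : ICLM lam (Wk k) = ∫ t, hkf k t * m k ∂lam := by
      rw [hWk]
      rw [← (ICLM lam).integral_comp_comm (cont_integrable lam (Wk_cont k))]
      congr 1
      funext t
      rw [_root_.map_smul, smul_eq_mul, ICLM_trF]
    have e2 : ∫ t, hkf k t ∂lam = m k * Λ 1 := by
      have e3 : ∫ t, hkf k t ∂lam = Λ (∫ t, trF (ψ k) t ∂lam) :=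
        (Λ.integral_comp_comm (cont_integrable lam (map_continuous (trF (ψ k)))))
      rw [e3, trF_integral, _root_.map_smul, smul_eq_mul]
    rw [e1, integral_mul_const, e2]
    ring
  have ΛRq : ∀ k (z : G), Λ (RR (-z) (qk lam ψ k)) = Wk k z := by
    intro k z
    rw [lemRq]
    have hu2 : Continuous fun t : G => (ψ k (t + z)) • trF (ψ k) t :=
      ((ψ k).continuous.comp (continuous_id.add continuous_const)).smul
        (map_continuous (trF (ψ k)))
    rw [← Λ.integral_comp_comm (cont_integrable lam hu2)]
    rw [evalWk]
    congr 1
    funext t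
    rw [_root_.map_smul, smul_eq_mul, mul_comm, add_comm]
  -- summability facts
  have bk_sq : ∀ k, ‖ψ k‖ ^ 2 ≤ (‖ψ k‖ + 1) ^ 2 := by
    intro k; nlinarith [norm_nonneg (ψ k)]
  have sa : Summable fun k => c k * a k := by
    refine summable_geom_bound 1 fun k => ?_
    rw [one_mul, Real.norm_eq_abs]
    exact ck_mul_le ψ k ((abs_ak_le lam ψ k).trans (bk_sq k))
  have sm : Summable fun k => c k * m k ^ 2 := by
    refine summable_geom_bound 1 fun k => ?_
    rw [one_mul, Real.norm_eq_abs]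
    refine ck_mul_le ψ k ?_
    rw [abs_of_nonneg (sq_nonneg _)]
    calc m k ^ 2 = |m k| ^ 2 := (sq_abs _).symm
      _ ≤ ‖ψ k‖ ^ 2 := pow_le_pow_left₀ (abs_nonneg _) (abs_mk_le lam ψ k) 2
      _ ≤ (‖ψ k‖ + 1) ^ 2 := bk_sq k
  have hSW : Summable fun k => c k • Wk k := by
    refine summable_geom_bound ‖Λ‖ fun k => ?_
    have h1 : ‖c k • Wk k‖ = c k * ‖Wk k‖ := by
      rw [norm_smul (c k) (Wk k), Real.norm_eq_abs, abs_of_pos (ck_pos ψ k)]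
    rw [h1]
    calc c k * ‖Wk k‖ ≤ c k * (‖Λ‖ * ‖ψ k‖ ^ 2) := by
          exact mul_le_mul_of_nonneg_left (Wk_norm k) (le_of_lt (ck_pos ψ k))
      _ ≤ ‖Λ‖ * (1/2:ℝ)^k := by
          have h2 : |c k * (‖ψ k‖ + 1) ^ 2| ≤ (1/2:ℝ)^k :=
            ck_mul_le ψ k (by rw [abs_of_nonneg (by positivity)])
          rw [abs_of_nonneg (mul_nonneg (le_of_lt (ck_pos ψ k)) (by positivity))] at h2
          have h3 : ‖ψ k‖ ^ 2 ≤ (‖ψ k‖ + 1) ^ 2 := bk_sq k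
          have h4 : (0:ℝ) ≤ ‖Λ‖ := norm_nonneg Λ
          have h5 : (0:ℝ) ≤ c k := le_of_lt (ck_pos ψ k)
          calc c k * (‖Λ‖ * ‖ψ k‖ ^ 2) = ‖Λ‖ * (c k * ‖ψ k‖ ^ 2) := by ring
            _ ≤ ‖Λ‖ * (c k * (‖ψ k‖ + 1) ^ 2) :=
                mul_le_mul_of_nonneg_left (mul_le_mul_of_nonneg_left h3 h5) h4
            _ ≤ ‖Λ‖ * (1/2:ℝ)^k := mul_le_mul_of_nonneg_left h2 h4
  have sWz : ∀ z : G, Summable fun k => c k * Wk k z := by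
    intro z
    refine summable_geom_bound ‖Λ‖ fun k => ?_
    have h1 : |Wk k z| ≤ ‖Wk k‖ := (Wk k).norm_coe_le_norm z
    have h2 := Wk_norm k
    have h3 : |c k * Wk k z| ≤ c k * (‖Λ‖ * ‖ψ k‖ ^ 2) := by
      rw [abs_mul, abs_of_pos (ck_pos ψ k)]
      exact mul_le_mul_of_nonneg_left (h1.trans h2) (le_of_lt (ck_pos ψ k))
    rw [Real.norm_eq_abs]
    refine h3.trans ?_
    have h4 : |c k * (‖ψ k‖ + 1) ^ 2| ≤ (1/2:ℝ)^k :=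
      ck_mul_le ψ k (by rw [abs_of_nonneg (by positivity)])
    rw [abs_of_nonneg (mul_nonneg (le_of_lt (ck_pos ψ k)) (by positivity))] at h4
    have h3' : ‖ψ k‖ ^ 2 ≤ (‖ψ k‖ + 1) ^ 2 := bk_sq k
    have h5 : (0:ℝ) ≤ c k := le_of_lt (ck_pos ψ k)
    have h6 : (0:ℝ) ≤ ‖Λ‖ := norm_nonneg Λ
    calc c k * (‖Λ‖ * ‖ψ k‖ ^ 2) = ‖Λ‖ * (c k * ‖ψ k‖ ^ 2) := by ring
      _ ≤ ‖Λ‖ * (c k * (‖ψ k‖ + 1) ^ 2) :=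
          mul_le_mul_of_nonneg_left (mul_le_mul_of_nonneg_left h3' h5) h6
      _ ≤ ‖Λ‖ * (1/2:ℝ)^k := mul_le_mul_of_nonneg_left h4 h6
  -- the key identity
  set T := ∑' k, c k * a k with hT
  have star : ∀ z : G, ∑' k, c k * Wk k z = (1 + T) * Λ 1 := by
    intro z
    have h1 : (Λ.comp (RR (-z))) (fdef lam ψ) = 0 := h0 z
    rw [fdef] at h1
    rw [map_add, ContinuousLinearMap.map_tsum _ (summable_fam lam ψ)] at h1
    have h2 : ∀ k, (Λ.comp (RR (-z))) (c k • (a k • (1:C(G,ℝ)) - qk lam ψ k))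
        = c k * a k * Λ 1 - c k * Wk k z := by
      intro k
      rw [_root_.map_smul, map_sub, _root_.map_smul]
      simp only [ContinuousLinearMap.comp_apply, RR_one, smul_eq_mul]
      rw [ΛRq k z]
      ring
    rw [tsum_congr h2] at h1
    have h3 : (Λ.comp (RR (-z))) (1 : C(G,ℝ)) = Λ 1 := by
      simp only [ContinuousLinearMap.comp_apply, RR_one]
    rw [h3] at h1
    have s1 : Summable fun k => c k * a k * Λ 1 := sa.mul_right (Λ 1)
    rw [Summable.tsum_sub s1 (sWz z)] at h1
    have h4 : ∑' k, c k * a k * Λ 1 = T * Λ 1 := tsum_mul_right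
    rw [h4] at h1
    linarith
  -- the element W
  set W : C(G,ℝ) := ∑' k, c k • Wk k with hW
  have Weq : W = ((1 + T) * Λ 1) • (1 : C(G,ℝ)) := by
    ext z
    have h1 := (ContinuousMap.evalCLM ℝ z).map_tsum hSW
    have h2 : ∀ k, (ContinuousMap.evalCLM ℝ z) (c k • Wk k) = c k * Wk k z := by
      intro k
      simp [ContinuousMap.evalCLM]
    rw [hW]
    calc (∑' k, c k • Wk k) z = ∑' k, c k * Wk k z := by
          rw [show (∑' k, c k • Wk k) z = (ContinuousMap.evalCLM ℝ z) (∑' k, c k • Wk k) from rfl,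
            h1, tsum_congr h2]
      _ = (1 + T) * Λ 1 := star z
      _ = (((1 + T) * Λ 1) • (1 : C(G,ℝ))) z := by simp
  -- equation I
  have EqI : ∑' k, c k * ∫ t, hkf k t * hkf k t ∂lam = (1 + T) * Λ 1 * Λ 1 := by
    have h1 : Λ W = (1 + T) * Λ 1 * Λ 1 := by
      rw [Weq, _root_.map_smul, smul_eq_mul]
    have h2 : Λ W = ∑' k, c k * Λ (Wk k) := by
      rw [hW, Λ.map_tsum hSW]
      exact tsum_congr fun k => by rw [_root_.map_smul, smul_eq_mul]
    have h3 : ∑' k, c k * Λ (Wk k) = ∑' k, c k * ∫ t, hkf k t * hkf k t ∂lam :=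
      tsum_congr fun k => by rw [LamWk k]
    rw [h2, h3] at h1
    exact h1
  -- equation II
  have EqII : (∑' k, c k * m k ^ 2) * Λ 1 = (1 + T) * Λ 1 := by
    have h1 : ICLM lam W = (1 + T) * Λ 1 := by
      rw [Weq, _root_.map_smul, smul_eq_mul, ICLM_one, mul_one]
    have h2 : ICLM lam W = ∑' k, c k * (m k * (m k * Λ 1)) := by
      rw [hW, (ICLM lam).map_tsum hSW]
      exact tsum_congr fun k => by rw [_root_.map_smul, smul_eq_mul, IWk k]
    have h3 : ∑' k, c k * (m k * (m k * Λ 1)) = (∑' k, c k * m k ^ 2) * Λ 1 := by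
      rw [← tsum_mul_right]
      exact tsum_congr fun k => by ring
    rw [h2, h3] at h1
    exact h1
  -- Λ 1 = 0
  have hΛ1 : Λ 1 = 0 := by
    by_contra hne
    have h5 := mul_right_cancel₀ hne EqII
    have hle : ∑' k, c k * m k ^ 2 ≤ T := by
      rw [hT]
      refine Summable.tsum_le_tsum (fun k => ?_) sm sa
      exact mul_le_mul_of_nonneg_left (ak_sub_mk_sq_nonneg lam ψ k) (le_of_lt (ck_pos ψ k))
    rw [h5] at hle
    linarith
  -- conclude each hkf vanishes
  have hI : Summable fun k => c k * ∫ t, hkf k t * hkf k t ∂lam := by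
    refine summable_geom_bound (‖Λ‖ * ‖Λ‖) fun k => ?_
    have h1 : |∫ t, hkf k t * hkf k t ∂lam| ≤ (‖Λ‖ * ‖ψ k‖) * (‖Λ‖ * ‖ψ k‖) := by
      have h2 : ‖∫ t, hkf k t * hkf k t ∂lam‖
          ≤ ((‖Λ‖ * ‖ψ k‖) * (‖Λ‖ * ‖ψ k‖)) * (lam Set.univ).toReal := by
        refine norm_integral_le_of_norm_le_const (Filter.Eventually.of_forall fun t => ?_)
        rw [Real.norm_eq_abs, abs_mul]
        exact mul_le_mul (hk_bd k t) (hk_bd k t) (abs_nonneg _)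
          (by positivity)
      rw [← Real.norm_eq_abs]
      simpa using h2
    rw [Real.norm_eq_abs, abs_mul, abs_of_pos (ck_pos ψ k)]
    have h3 : |∫ t, hkf k t * hkf k t ∂lam| ≤ (‖Λ‖ * ‖Λ‖) * (‖ψ k‖ + 1) ^ 2 := by
      refine h1.trans ?_
      have := bk_sq k
      nlinarith [norm_nonneg Λ, norm_nonneg (ψ k)]
    calc c k * |∫ t, hkf k t * hkf k t ∂lam| ≤ c k * ((‖Λ‖ * ‖Λ‖) * (‖ψ k‖ + 1) ^ 2) :=
          mul_le_mul_of_nonneg_left h3 (le_of_lt (ck_pos ψ k))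
      _ ≤ ‖Λ‖ * ‖Λ‖ * (1/2:ℝ)^k := by
          have h4 : |c k * (‖ψ k‖ + 1) ^ 2| ≤ (1/2:ℝ)^k :=
            ck_mul_le ψ k (by rw [abs_of_nonneg (by positivity)])
          rw [abs_of_nonneg (mul_nonneg (le_of_lt (ck_pos ψ k)) (by positivity))] at h4
          have h6 : (0:ℝ) ≤ ‖Λ‖ * ‖Λ‖ := mul_nonneg (norm_nonneg Λ) (norm_nonneg Λ)
          calc c k * (‖Λ‖ * ‖Λ‖ * (‖ψ k‖ + 1) ^ 2) = (‖Λ‖ * ‖Λ‖) * (c k * (‖ψ k‖ + 1) ^ 2) := by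
                ring
            _ ≤ (‖Λ‖ * ‖Λ‖) * (1/2:ℝ)^k := mul_le_mul_of_nonneg_left h4 h6
  have hzero : ∀ k, ∫ t, hkf k t * hkf k t ∂lam = 0 := by
    intro k
    have hnn : ∀ j, 0 ≤ c j * ∫ t, hkf j t * hkf j t ∂lam := by
      intro j
      have := integral_nonneg (μ := lam) (f := fun t => hkf j t * hkf j t) fun t => mul_self_nonneg (hkf j t)
      exact mul_nonneg (le_of_lt (ck_pos ψ j)) this
    have hsum0 : ∑' k, c k * ∫ t, hkf k t * hkf k t ∂lam = 0 := by
      rw [EqI, hΛ1]; ring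
    have hle := Summable.le_tsum hI k (fun j _ => hnn j)
    rw [hsum0] at hle
    have := hnn k
    have hck := ck_pos ψ k
    nlinarith
  have hk_zero : ∀ k t, hkf k t = 0 := by
    intro k
    have hcont2 : Continuous fun t => hkf k t * hkf k t := (hk_cont k).mul (hk_cont k)
    have hae := (integral_eq_zero_iff_of_nonneg
      (fun t => mul_self_nonneg (hkf k t)) (cont_integrable lam hcont2)).mp (hzero k)
    have heq := (Continuous.ae_eq_iff_eq lam hcont2 continuous_const).mp hae
    intro t
    have h6 := congrFun heq t
    change hkf k t * hkf k t = 0 at h6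
    exact mul_self_eq_zero.mp h6
  have hΛψ : ∀ k, Λ (ψ k) = 0 := by
    intro k
    have := hk_zero k 0
    rw [hhkf] at this
    simpa [trF_zero] using this
  -- conclude
  ext F
  have hcl : IsClosed {F : C(G,ℝ) | Λ F = 0} := isClosed_eq Λ.continuous continuous_const
  have hsub : Set.range ψ ⊆ {F : C(G,ℝ) | Λ F = 0} := by
    rintro _ ⟨k, rfl⟩; exact hΛψ k
  have := hcl.closure_subset_iff.mpr hsub
  have hmem : F ∈ closure (Set.range ψ) := hψ F
  simpa using this hmem

end Meas

end MTTS

/-- **Minimal translations on compact abelian groups are topologically simple.**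
Let `G` be a compact metrizable abelian topological group and `g ∈ G` be such that the
translation `τ : x ↦ x + g` is minimal, equivalently `{n • g : n ∈ ℤ}` is dense in `G`.
Then there exists `f ∈ C(G)` such that the linear span of `{f ∘ τⁿ : n ∈ ℤ}` is dense in
`C(G)`, i.e. `Mult(τ) = 1`. -/
theorem minimal_translation_topologically_simple
    {G : Type*} [AddCommGroup G] [TopologicalSpace G] [IsTopologicalAddGroup G]
    [CompactSpace G] [TopologicalSpace.MetrizableSpace G]
    (g : G) (hg : Dense (Set.range fun n : ℤ => n • g)) :
    ∃ f : C(G, ℝ),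
      Dense (Submodule.span ℝ
        {h : C(G, ℝ) | ∃ n : ℤ, ∀ x : G, h x = f (x + n • g)} : Set C(G, ℝ)) := by
  classical
  letI : MetricSpace G := TopologicalSpace.metrizableSpaceMetric G
  haveI : SecondCountableTopology G := by infer_instance
  letI : MeasurableSpace G := borel G
  haveI : BorelSpace G := ⟨rfl⟩
  haveI : Nonempty G := ⟨0⟩
  set lam : MeasureTheory.Measure G := MeasureTheory.Measure.addHaarMeasure ⊤ with hlam
  haveI : MeasureTheory.IsProbabilityMeasure lam := by
    constructor
    rw [hlam, ← TopologicalSpace.PositiveCompacts.coe_top (α := G)]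
    exact MeasureTheory.Measure.addHaarMeasure_self
  haveI : Nonempty C(G, ℝ) := ⟨1⟩
  obtain ⟨ψ, hψ⟩ := TopologicalSpace.exists_dense_seq C(G, ℝ)
  refine ⟨MTTS.fdef lam ψ, ?_⟩
  apply MTTS.dense_span_of_dual
  intro Λ hΛ
  have hn : ∀ n : ℤ, Λ (MTTS.trF (MTTS.fdef lam ψ) (n • g)) = 0 := fun n =>
    hΛ _ ⟨n, fun x => rfl⟩
  have hcont : Continuous fun y : G => Λ (MTTS.trF (MTTS.fdef lam ψ) y) :=
    Λ.continuous.comp (map_continuous (MTTS.trF (MTTS.fdef lam ψ)))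
  have hzero : (fun y : G => Λ (MTTS.trF (MTTS.fdef lam ψ) y)) = fun _ => 0 :=
    Continuous.ext_on hg hcont continuous_const (by rintro _ ⟨n, rfl⟩; exact hn n)
  refine MTTS.dual_vanish lam ψ hψ Λ fun z => ?_
  have := congrFun hzero (-z)
  simpa [MTTS.RR_eq_trF] using this
end

section
/- Let A be a finite alphabet, let X ⊆ A^ℤ be an aperiodic subshift, and let k be a positive integer. Suppose n is such that p_X(n+1) < (k+1)(n+1) and p_X(n+1) − p_X(n) ≤ k. Then for every m ≥ (k+2)(n+1), every word w ∈ L_m(X) contains a subword of length n belonging to Q_n, where Q_n is the set of right-special words of length n. -/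
/-- The shift by `k ∈ ℤ` on the space `ℤ → A` of bilateral sequences:
`(σᵏ x) n = x (n + k)`.  For `k = 1` this is the usual left shift `σ`. -/
def shiftZ (A : Type*) [TopologicalSpace A] (k : ℤ) : (ℤ → A) ≃ₜ (ℤ → A) where
  toFun x n := x (n + k)
  invFun x n := x (n - k)
  left_inv x := funext fun n => congrArg x (by ring)
  right_inv x := funext fun n => congrArg x (by ring)
  continuous_toFun := continuous_pi fun n => continuous_apply (n + k)
  continuous_invFun := continuous_pi fun n => continuous_apply (n - k)

/-- The words of length `n` appearing in points of `X ⊆ Aᶻ`. -/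
def langWords {A : Type*} [TopologicalSpace A] (X : Set (ℤ → A)) (n : ℕ) :
    Set (Fin n → A) :=
  {w | ∃ x ∈ X, ∃ k : ℤ, ∀ i : Fin n, x (k + i) = w i}

/-- The complexity function `p_X(n)`: the number of `n`-words of `X`. -/
noncomputable def complexity {A : Type*} [TopologicalSpace A] (X : Set (ℤ → A)) (n : ℕ) :
    ℕ :=
  (langWords X n).ncard

/-- The word `w` extended on the right by the letter `a`. -/
def wordExt {A : Type*} {n : ℕ} (w : Fin n → A) (a : A) : Fin (n + 1) → A :=
  fun j => if h : (j : ℕ) < n then w ⟨j, h⟩ else a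

/-- The set `Q_n` of right-special words of length `n` of the subshift `X`: words `w` of
`X` admitting at least two distinct extensions `wa` in the language of `X`. -/
def rightSpecial {A : Type*} [TopologicalSpace A] (X : Set (ℤ → A)) (n : ℕ) :
    Set (Fin n → A) :=
  {w | w ∈ langWords X n ∧ ∃ a b : A, a ≠ b ∧
    wordExt w a ∈ langWords X (n + 1) ∧ wordExt w b ∈ langWords X (n + 1)}

lemma window_ext {A : Type*} (x : ℤ → A) (s : ℤ) (n : ℕ) :
    (fun j : Fin (n+1) => x (s + j)) = wordExt (fun j : Fin n => x (s + j)) (x (s + n)) := by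
  funext j
  simp only [wordExt]
  split_ifs with h
  · rfl
  · exact congrArg x (by have hj := j.isLt; omega)


/-- **Boshernitzan's lemma.**  Let `X ⊆ Aᶻ` be an aperiodic subshift and `k ≥ 1`.
Suppose `n` satisfies `p_X(n+1) < (k+1)(n+1)` and `p_X(n+1) - p_X(n) ≤ k`.  Then for
every `m ≥ (k+2)(n+1)`, every word `w ∈ L_m(X)` contains a subword of length `n`
belonging to `Q_n`, the set of right-special words of length `n`. -/
theorem contains_rightSpecial_subword
    {A : Type*} [Fintype A] [TopologicalSpace A] [DiscreteTopology A]
    (X : Set (ℤ → A)) (hne : X.Nonempty) (hcl : IsClosed X)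
    (hinv : ∀ k : ℤ, shiftZ A k '' X = X)
    (haper : ∀ x ∈ X, ∀ n : ℕ, 0 < n → shiftZ A n x ≠ x)
    (k : ℕ) (hk : 1 ≤ k) (n : ℕ)
    (h1 : complexity X (n + 1) < (k + 1) * (n + 1))
    (h2 : complexity X (n + 1) ≤ complexity X n + k) :
    ∀ m : ℕ, (k + 2) * (n + 1) ≤ m → ∀ w ∈ langWords X m,
      ∃ i : ℕ, ∃ hi : i + n ≤ m,
        (fun j : Fin n => w ⟨i + j, by have hj := j.2; omega⟩) ∈ rightSpecial X n := by
  intro m hm w hw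
  by_contra hcon
  push_neg at hcon
  obtain ⟨x, hx, c, hxw⟩ := hw
  -- the windows of x inside the occurrence of w are not right-special
  have hns : ∀ i : ℕ, i + n ≤ m → (fun j : Fin n => x (c + i + j)) ∉ rightSpecial X n := by
    intro i hi h
    refine hcon i hi ?_
    have he : (fun j : Fin n => w ⟨i + ↑j, by have hj := j.2; omega⟩)
        = (fun j : Fin n => x (c + i + j)) := by
      funext j
      rw [← hxw ⟨i + ↑j, by have hj := j.2; omega⟩]
      exact congrArg x (by push_cast; ring)
    rw [he]; exact h
  -- arithmetic
  have e : (k+2)*(n+1) = (k+1)*(n+1) + (n+1) := by ring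
  rw [e] at hm
  set q := (k+1)*(n+1) with hq
  have hmn : complexity X (n+1) < m - n := by omega
  -- pigeonhole on (n+1)-windows
  have hfin : (langWords X (n+1)).Finite := Set.toFinite _
  have hcard : (langWords X (n+1)).ncard = hfin.toFinset.card :=
    Set.ncard_eq_toFinset_card _ hfin
  obtain ⟨i₀, -, j₀, -, hne', heq⟩ :=
    Finset.exists_ne_map_eq_of_card_lt_of_maps_to
      (s := (Finset.univ : Finset (Fin (m - n))))
      (t := hfin.toFinset)
      (f := fun i => fun j : Fin (n+1) => x (c + (i : ℕ) + j))
      (by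
        simp only [Finset.card_univ, Fintype.card_fin]
        have : complexity X (n+1) = hfin.toFinset.card := hcard
        omega)
      (by
        intro a _
        simp only [Finset.mem_coe, Set.Finite.mem_toFinset]
        exact ⟨x, hx, c + (a : ℕ), fun j => rfl⟩)
  -- reduce to the case i₀ < j₀
  have hmain : ∀ a0 b0 : Fin (m - n), (a0 : ℕ) < (b0 : ℕ) →
      ((fun j : Fin (n+1) => x (c + (a0 : ℕ) + j))
        = fun j : Fin (n+1) => x (c + (b0 : ℕ) + j)) → False := by
    intro a0 b0 hab hweq
    set i : ℕ := (a0 : ℕ) with hi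
    set p : ℕ := (b0 : ℕ) - (a0 : ℕ) with hpdef
    have hp : 0 < p := by omega
    have hblt : (b0 : ℕ) < m - n := b0.isLt
    have hbound : i + p + (n + 1) ≤ m := by omega
    set B : ℤ := c + (i : ℕ) with hB
    -- the basic period relation on [0, n]
    have hper : ∀ u : ℕ, u ≤ n → x (B + u) = x (B + u + p) := by
      intro u hu
      have h1' := congrFun hweq (⟨u, by omega⟩ : Fin (n+1))
      simp only [Fin.val_mk] at h1'
      rw [h1']
      exact congrArg x (by omega)
    -- mod-p reduction on [0, n + p]
    have hL : ∀ s : ℕ, s ≤ n + p → x (B + s) = x (B + (s % p : ℕ)) := by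
      intro s
      induction s using Nat.strong_induction_on with
      | _ s IH =>
        intro hs
        rcases lt_or_ge s p with h | h
        · rw [Nat.mod_eq_of_lt h]
        · have h2 : x (B + (s - p : ℕ)) = x (B + s) := by
            rw [hper (s - p) (by omega)]
            exact congrArg x (by omega)
          rw [← h2, IH (s - p) (by omega) (by omega), Nat.mod_eq_sub_mod h]
    -- the key forcing claim: x is eventually p-periodic to the right of B
    have key : ∀ t : ℕ, x (B + t) = x (B + (t % p : ℕ)) := by
      intro t
      induction t using Nat.strong_induction_on with
      | _ t IH =>
        rcases le_or_gt t (n + p) with h | h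
        · exact hL t h
        · set r : ℕ := (t - n) % p with hr
          have hrp : r < p := Nat.mod_lt _ hp
          have hnsw := hns (i + r) (by omega)
          have hU : (fun j : Fin n => x (c + ((i + r : ℕ) : ℤ) + j))
              = fun j : Fin n => x (B + r + j) := by
            funext j
            exact congrArg x (by rw [hB]; push_cast; ring)
          rw [hU] at hnsw
          have humem : (fun j : Fin n => x (B + r + j)) ∈ langWords X n :=
            ⟨x, hx, B + (r : ℕ), fun j => rfl⟩
          have ha : wordExt (fun j : Fin n => x (B + r + j)) (x (B + r + n))
              ∈ langWords X (n+1) := by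
            rw [← window_ext]
            exact ⟨x, hx, B + (r : ℕ), fun j => rfl⟩
          have hmd : (t - n) % p = r % p := by rw [Nat.mod_eq_of_lt hrp, hr]
          have hwin2 : (fun j : Fin (n+1) => x (B + ((t - n : ℕ) : ℤ) + j))
              = wordExt (fun j : Fin n => x (B + r + j)) (x (B + t)) := by
            rw [window_ext]
            have hw1 : (fun j : Fin n => x (B + ((t - n : ℕ) : ℤ) + j))
                = fun j : Fin n => x (B + r + j) := by
              funext j
              have hj := j.isLt
              have s1 : x (B + ((t - n : ℕ) : ℤ) + (j : ℤ)) = x (B + ((t - n + j : ℕ) : ℤ)) :=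
                congrArg x (by omega)
              have s2 := IH (t - n + j) (by omega)
              have s3 : (t - n + (j : ℕ)) % p = (r + (j : ℕ)) % p :=
                Nat.ModEq.add_right _ hmd
              have s4 := (hL (r + (j : ℕ)) (by omega)).symm
              rw [s1, s2, s3, s4]
              exact congrArg x (by omega)
            have hw2 : x (B + ((t - n : ℕ) : ℤ) + (n : ℤ)) = x (B + t) :=
              congrArg x (by omega)
            rw [hw1, hw2]
          have hb' : wordExt (fun j : Fin n => x (B + r + j)) (x (B + t))
              ∈ langWords X (n+1) := by
            rw [← hwin2]
            exact ⟨x, hx, B + ((t - n : ℕ) : ℤ), fun j => rfl⟩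
          have hab2 : x (B + r + n) = x (B + t) := by
            by_contra hne2
            exact hnsw ⟨humem, _, _, hne2, ha, hb'⟩
          have s5 : t % p = (r + n) % p := by
            have e6 : (t - n + n) % p = (r + n) % p := Nat.ModEq.add_right _ hmd
            rw [show t - n + n = t by omega] at e6
            exact e6
          rw [← hab2, s5, ← hL (r + n) (by omega)]
          exact congrArg x (by omega)
    -- the periodic point y
    set y : ℤ → A := fun s => x (B + s % (p : ℤ)) with hy
    have hyper : shiftZ A (p : ℕ) y = y := by
      funext s
      show y (s + (p : ℕ)) = y s
      simp only [hy]
      congr 1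
      simp [Int.add_emod]
    have hyX : y ∈ X := by
      have hzX : ∀ t : ℕ, shiftZ A (B + t * p) x ∈ X := by
        intro t
        rw [← hinv (B + t * p)]
        exact ⟨x, hx, rfl⟩
      refine hcl.mem_of_tendsto (f := fun t : ℕ => shiftZ A (B + t * p) x) (b := Filter.atTop) ?_
        (Filter.Eventually.of_forall hzX)
      rw [tendsto_pi_nhds]
      intro s
      refine tendsto_const_nhds.congr' ?_
      filter_upwards [Filter.eventually_ge_atTop (-s).toNat] with t ht
      have hts : -s ≤ (t : ℤ) := le_trans (Int.self_le_toNat _) (by exact_mod_cast ht)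
      have hp1 : (1 : ℤ) ≤ (p : ℤ) := by exact_mod_cast hp
      have h0 : 0 ≤ s + (t : ℤ) * (p : ℤ) := by nlinarith
      set u : ℕ := (s + (t : ℤ) * (p : ℤ)).toNat with hu
      have hu' : (u : ℤ) = s + (t : ℤ) * (p : ℤ) := Int.toNat_of_nonneg h0
      have e3 : y s = x (B + (u : ℤ) % (p : ℤ)) := by
        simp only [hy]
        congr 2
        rw [hu', Int.add_mul_emod_self_right]
      have e4 : (shiftZ A (B + t * p) x) s = x (B + (u : ℤ)) := by
        show x (s + (B + t * p)) = x (B + (u : ℤ))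
        exact congrArg x (by omega)
      have e5 : x (B + (u : ℤ)) = x (B + ((u % p : ℕ) : ℤ)) := key u
      rw [e4, e5, e3]
      exact congrArg x (by push_cast; ring)
    exact haper y hyX p hp hyper
  rcases hne'.lt_or_gt with hlt | hlt
  · exact hmain i₀ j₀ hlt heq
  · exact hmain j₀ i₀ hlt heq.symm
end
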